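/- arXiv:2208.08347 — 4 statements merged into one kernel-verified Lean document; each statement's English description precedes it below -/
import Mathlib

section
/- Let m be a positive integer and suppose (y₁, x₁, x₂) are integers with x₁ ≠ 0, x₂ ≠ 0, satisfying x₁·x₂ − 2·y₁·x₁ = 0 and y₁²·x₁ − y₁·x₁·x₂ − x₂ = −m·x₁. Then x₂ = 2·y₁, there exists a nonzero integer t with 2·y₁ = t·x₁, and m = (t·x₁/2)² + t (in particular 4·m = (t·x₁)² + 4t). -/
theorem stmt_8 (m : ℤ) (hm : 0 < m) (y₁ x₁ x₂ : ℤ) (hx₁ : x₁ ≠ 0) (hx₂ : x₂ ≠ 0)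
    (h1 : x₁ * x₂ - 2 * y₁ * x₁ = 0)
    (h2 : y₁ ^ 2 * x₁ - y₁ * x₁ * x₂ - x₂ = -m * x₁) :
    x₂ = 2 * y₁ ∧
    ∃ t : ℤ, t ≠ 0 ∧ 2 * y₁ = t * x₁ ∧ m = (t * x₁ / 2) ^ 2 + t ∧
      4 * m = (t * x₁) ^ 2 + 4 * t := by
  have hx2 : x₂ = 2 * y₁ := by
    have h : x₁ * (x₂ - 2 * y₁) = 0 := by linarith [h1]
    rcases mul_eq_zero.mp h with h' | h'
    · exact absurd h' hx₁
    · linarith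
  subst hx2
  set t : ℤ := m - y₁ ^ 2 with ht
  have htx : t * x₁ = 2 * y₁ := by ring_nf; nlinarith [h2]
  have hy : y₁ ≠ 0 := by
    intro h; apply hx₂; rw [h]; ring
  have htne : t ≠ 0 := by
    intro h; rw [h, zero_mul] at htx
    exact hy (by linarith)
  refine ⟨rfl, t, htne, htx.symm, ?_, by rw [htx, ht]; ring⟩
  rw [htx]
  have : 2 * y₁ / 2 = y₁ := by omega
  rw [this, ht]; ring
end

section
/- Let m be a positive integer and let (y₁, x₁, x₂, x₃) be integers with x₁, x₂, x₃ nonzero satisfying 2y₁x₂x₁ + 2y₁ − x₃x₂x₁ + x₂ − x₁ − x₃ = 0 and m(x₂x₁ + 1) = y₁(x₃x₂x₁ + x₁ + x₃ − x₂) − y₁²(x₂x₁ + 1) + x₃x₂ + 1. If moreover 2y₁ = x₃, then x₁ = x₂, x₁ is even, and writing x₁ = 2s and y₁ = s + (4s² + 1)t for integers s ≠ 0 and t, we have m = 16t²s⁴ + 8ts³ + (8t² + 1)s² + 6ts + t² + 1. -/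
theorem stmt_11 (m : ℤ) (hm : 0 < m) (y₁ x₁ x₂ x₃ : ℤ)
    (hx₁ : x₁ ≠ 0) (hx₂ : x₂ ≠ 0) (hx₃ : x₃ ≠ 0)
    (h1 : 2 * y₁ * x₂ * x₁ + 2 * y₁ - x₃ * x₂ * x₁ + x₂ - x₁ - x₃ = 0)
    (h2 : m * (x₂ * x₁ + 1) =
      y₁ * (x₃ * x₂ * x₁ + x₁ + x₃ - x₂) - y₁ ^ 2 * (x₂ * x₁ + 1) + x₃ * x₂ + 1)
    (h3 : 2 * y₁ = x₃) :
    x₁ = x₂ ∧ 2 ∣ x₁ ∧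
    ∃ s t : ℤ, s ≠ 0 ∧ x₁ = 2 * s ∧ y₁ = s + (4 * s ^ 2 + 1) * t ∧
      m = 16 * t ^ 2 * s ^ 4 + 8 * t * s ^ 3 + (8 * t ^ 2 + 1) * s ^ 2 + 6 * t * s
            + t ^ 2 + 1 := by
  subst h3
  have hx : x₁ = x₂ := by linear_combination -h1
  subst hx
  have key : (m - y₁ ^ 2) * (x₁ ^ 2 + 1) = 2 * y₁ * x₁ + 1 := by linear_combination h2
  -- x₁² + 1 divides x₁ * (2y₁ - x₁)
  have hdvd : (x₁ ^ 2 + 1) ∣ x₁ * (2 * y₁ - x₁) := ⟨m - y₁ ^ 2 - 1, by linear_combination -key⟩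
  have hcop : IsCoprime (x₁ ^ 2 + 1) x₁ := ⟨1, -x₁, by ring⟩
  have hdvd2 : (x₁ ^ 2 + 1) ∣ (2 * y₁ - x₁) := hcop.dvd_of_dvd_mul_left hdvd
  obtain ⟨u, hu⟩ := hdvd2
  -- x₁ is even
  have hx1even : 2 ∣ x₁ := by
    rcases Int.even_or_odd x₁ with h | h
    · exact h.two_dvd
    · exfalso
      obtain ⟨n, hn⟩ := h
      have h2d : (2:ℤ) ∣ (x₁ ^ 2 + 1) * u := ⟨(2 * n ^ 2 + 2 * n + 1) * u, by rw [hn]; ring⟩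
      rw [← hu] at h2d
      obtain ⟨c, hc⟩ := h2d
      omega
  obtain ⟨s, hs⟩ := hx1even
  have hsne : s ≠ 0 := by rintro rfl; exact hx₁ (by omega)
  -- u is even
  have hueven : (2:ℤ) ∣ u := by
    have h2d : (2:ℤ) ∣ (x₁ ^ 2 + 1) * u := ⟨y₁ - s, by rw [← hu]; omega⟩
    rcases Int.even_or_odd u with h | h
    · exact h.two_dvd
    · exfalso
      have hodd : Odd ((x₁ ^ 2 + 1) * u) := by
        refine Odd.mul ⟨2 * s ^ 2, by rw [hs]; ring⟩ h
      obtain ⟨c, hc⟩ := h2d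
      obtain ⟨d, hd⟩ := hodd
      omega
  obtain ⟨t, ht⟩ := hueven
  have hy : y₁ = s + (4 * s ^ 2 + 1) * t := by
    have : 2 * y₁ - 2 * s = ((2 * s) ^ 2 + 1) * (2 * t) := by rw [← ht, ← hs]; linarith [hu]
    linarith [this]
  refine ⟨rfl, ⟨s, hs⟩, s, t, hsne, hs, hy, ?_⟩
  -- m - y₁² = 1 + 4st
  rw [hs, hy] at key
  have hk : (m - (s + (4 * s ^ 2 + 1) * t) ^ 2) * (4 * s ^ 2 + 1)
      = (1 + 4 * s * t) * (4 * s ^ 2 + 1) := by linear_combination key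
  have h4s : (4 * s ^ 2 + 1 : ℤ) ≠ 0 := by positivity
  have hk2 := mul_right_cancel₀ h4s hk
  linear_combination hk2
end

section
/- For integers t, the matrix product D(−2+t)·D(1)·D(−2)·D(−1+2t)·D(0)·D(−(−2+t))·D(0) equals [[−t, −t² − 1], [−1, −t]], where D(a) = [[a, 1], [1, 0]]. -/
def D (a : ℤ) : Matrix (Fin 2) (Fin 2) ℤ := !![a, 1; 1, 0]

theorem stmt_14 (t : ℤ) :
    D (-2 + t) * D 1 * D (-2) * D (-1 + 2 * t) * D 0 * D (-(-2 + t)) * D 0 =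
      !![-t, -t ^ 2 - 1; -1, -t] := by
  simp only [D]
  ext i j
  fin_cases i <;> fin_cases j <;>
    simp [Matrix.mul_apply, Fin.sum_univ_succ] <;> ring
end

section
/- For every integer n ≥ 1, the algebraic number η_n = 1 + Σ_{k=1}^{2^n − 1} 2·cos(kπ/2^{n+1}) satisfies η_n · τ_n(η_n) = −1, where τ_n is the nontrivial automorphism of ℚ(2cos(π/2^{n+1})) fixing ℚ(2cos(π/2^n)); equivalently, the relative norm N_{n/n−1}(η_n) = −1. -/
open Real Finset

/-- The Horie unit `η n` and its image under the nontrivial automorphism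
`τ_n : X_n ↦ -X_n` (which negates exactly the odd-index cosine terms)
multiply to `-1`, i.e. the relative norm `N_{n/n-1}(η_n) = -1`. -/
theorem stmt_19 (n : ℕ) (hn : 1 ≤ n) :
    (1 + ∑ k ∈ Finset.Icc (1 : ℕ) (2 ^ n - 1),
        2 * Real.cos ((k : ℝ) * Real.pi / 2 ^ (n + 1))) *
    (1 + ∑ k ∈ Finset.Icc (1 : ℕ) (2 ^ n - 1),
        (-1 : ℝ) ^ k * (2 * Real.cos ((k : ℝ) * Real.pi / 2 ^ (n + 1)))) = -1 := by
  set m : ℕ := 2 ^ n with hm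
  set t : ℝ := π / 2 ^ (n + 2) with ht
  have hm1 : 1 ≤ m := Nat.one_le_two_pow
  have h2 : (2:ℝ) ^ (n + 2) = 2 ^ (n+1) * 2 := by rw [pow_succ]
  have hmt : (m : ℝ) * t * 2 = π / 2 := by
    rw [ht, hm, h2, pow_succ]
    push_cast
    have : (2:ℝ) ^ n ≠ 0 := by positivity
    field_simp
  have hθ : ∀ k : ℝ, k * π / 2 ^ (n+1) = 2 * k * t := by
    intro k
    rw [ht, h2]
    have : (2:ℝ) ^ (n+1) ≠ 0 := by positivity
    field_simp
  have hs : 0 < Real.sin t := by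
    apply Real.sin_pos_of_pos_of_lt_pi
    · rw [ht]; positivity
    · rw [ht]
      have h1 : (1:ℝ) < 2 ^ (n+2) := by
        have : (1:ℝ) < 2 := one_lt_two
        exact one_lt_pow₀ this (by omega)
      calc π / 2 ^ (n+2) < π / 1 := by
            apply div_lt_div_of_pos_left Real.pi_pos one_pos h1
        _ = π := by ring
  have hc : 0 < Real.cos t := by
    apply Real.cos_pos_of_mem_Ioo
    constructor
    · have : (0:ℝ) < t := by rw [ht]; positivity
      linarith [Real.pi_pos]
    · rw [ht]
      have h1 : (2:ℝ) < 2 ^ (n+2) := by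
        have : (2:ℝ)^1 < 2 ^ (n+2) := by
          apply pow_lt_pow_right₀ one_lt_two (by omega)
        simpa using this
      rw [div_lt_div_iff₀ (by positivity) two_pos]
      nlinarith [Real.pi_pos]
  -- rewrite angles
  simp only [hθ]
  -- convert Icc sums to range sums
  have hIco : Finset.Icc (1:ℕ) (m - 1) = Finset.Ico 1 m := by
    rw [← Finset.Ico_add_one_right_eq_Icc, Nat.sub_add_cancel hm1]
  rw [hIco, Finset.sum_Ico_eq_sum_range, Finset.sum_Ico_eq_sum_range]
  set N := m - 1 with hN
  have hNm : (N : ℝ) = (m : ℝ) - 1 := by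
    rw [hN]; push_cast [Nat.cast_sub hm1]; ring
  have hmeven : Even m := by
    rw [hm]
    exact (Nat.even_pow).mpr ⟨even_two, by omega⟩
  -- first factor times sin t
  have key1 : (1 + ∑ k ∈ Finset.range N, 2 * Real.cos (2 * (↑(1 + k)) * t)) *
      Real.sin t = Real.cos t := by
    rw [add_mul, one_mul, Finset.sum_mul]
    have step : ∀ k ∈ Finset.range N,
        2 * Real.cos (2 * (↑(1 + k)) * t) * Real.sin t =
        (fun j : ℕ => Real.sin ((2 * (j:ℝ) + 1) * t)) (k + 1) -
        (fun j : ℕ => Real.sin ((2 * (j:ℝ) + 1) * t)) k := by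
      intro k _
      simp only
      rw [Real.sin_sub_sin]
      push_cast
      ring_nf
    rw [Finset.sum_congr rfl step,
      Finset.sum_range_sub (fun j : ℕ => Real.sin ((2 * (j:ℝ) + 1) * t)) N]
    rw [hNm]
    have e1 : (2 * ((m:ℝ) - 1) + 1) * t = π / 2 - t := by
      have : (2 * ((m:ℝ) - 1) + 1) * t = (m:ℝ) * t * 2 - t := by ring
      rw [this, hmt]
    rw [e1, Real.sin_pi_div_two_sub]
    push_cast
    ring_nf
  -- second factor times cos t
  have key2 : (1 + ∑ k ∈ Finset.range N,
      (-1:ℝ) ^ (1 + k) * (2 * Real.cos (2 * (↑(1 + k)) * t))) *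
      Real.cos t = -Real.sin t := by
    rw [add_mul, one_mul, Finset.sum_mul]
    have step : ∀ k ∈ Finset.range N,
        (-1:ℝ) ^ (1 + k) * (2 * Real.cos (2 * (↑(1 + k)) * t)) * Real.cos t =
        (fun j : ℕ => (-1:ℝ) ^ (j + 1) * Real.cos ((2 * (j:ℝ) + 1) * t)) k -
        (fun j : ℕ => (-1:ℝ) ^ (j + 1) * Real.cos ((2 * (j:ℝ) + 1) * t)) (k + 1) := by
      intro k _
      simp only
      have hcc : Real.cos ((2 * ((k:ℝ)+1) + 1) * t) + Real.cos ((2 * (k:ℝ) + 1) * t) =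
          2 * Real.cos (2 * ((k:ℝ) + 1) * t) * Real.cos t := by
        rw [Real.cos_add_cos]
        ring_nf
      have hp1 : ((-1:ℝ)) ^ (1 + k) = (-1:ℝ) ^ (k + 1) := by rw [add_comm]
      have hp2 : ((-1:ℝ)) ^ (k + 1 + 1) = -((-1:ℝ) ^ (k + 1)) := by
        rw [pow_succ]; ring
      rw [hp1, hp2]
      push_cast
      rw [show (2:ℝ) * (1 + (k:ℝ)) * t = 2 * ((k:ℝ) + 1) * t by ring]
      linear_combination ((-1:ℝ)^k) * hcc
    rw [Finset.sum_congr rfl step,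
      Finset.sum_range_sub' (fun j : ℕ => (-1:ℝ) ^ (j + 1) * Real.cos ((2 * (j:ℝ) + 1) * t)) N]
    have hN1 : N + 1 = m := by omega
    rw [hN1, hNm]
    have e1 : (2 * ((m:ℝ) - 1) + 1) * t = π / 2 - t := by
      have : (2 * ((m:ℝ) - 1) + 1) * t = (m:ℝ) * t * 2 - t := by ring
      rw [this, hmt]
    rw [e1, Real.cos_pi_div_two_sub, hmeven.neg_one_pow]
    push_cast
    ring_nf
  -- combine
  have hne : Real.sin t * Real.cos t ≠ 0 := ne_of_gt (mul_pos hs hc)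
  apply mul_right_cancel₀ hne
  calc (1 + ∑ k ∈ Finset.range N, 2 * Real.cos (2 * (↑(1 + k)) * t)) *
      (1 + ∑ k ∈ Finset.range N,
        (-1:ℝ) ^ (1 + k) * (2 * Real.cos (2 * (↑(1 + k)) * t))) *
      (Real.sin t * Real.cos t)
      = ((1 + ∑ k ∈ Finset.range N, 2 * Real.cos (2 * (↑(1 + k)) * t)) * Real.sin t) *
        ((1 + ∑ k ∈ Finset.range N,
          (-1:ℝ) ^ (1 + k) * (2 * Real.cos (2 * (↑(1 + k)) * t))) * Real.cos t) := by
        ring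
    _ = Real.cos t * (-Real.sin t) := by rw [key1, key2]
    _ = -1 * (Real.sin t * Real.cos t) := by ring
end
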